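/- Poisson kernel bounds for the 1D band model (second part of Lemma B.1): Fix integers W ≥ 1 and r ≥ 1, fix ξ ∈ ℤ, let B_r(ξ) = { x ∈ ℤ : |x−ξ| ≤ rW }, let −Δ_W^{B_r} be the matrix on ℝ^{B_r(ξ)} given by (−Δ_W^{B_r} f)(x) = 2W·f(x) − Σ_{y∈B_r(ξ): 0<|x−y|≤W} f(y), and let G_r = (−Δ_W^{B_r})^{-1}. For x in the exterior boundary ∂B_r(ξ) = { x ∈ ℤ : rW < |x−ξ| ≤ (r+1)W }, define the Poisson kernel P_r(ξ,x) = Σ_{y∈B_r(ξ): 0<|x−y|≤W} G_r(ξ,y). Then for every x ∈ ∂B_r(ξ): 1/(2W³) ≤ P_r(ξ,x) ≤ 1. -/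

import Mathlib

namespace Band1D

/-- The ball `B_r(ξ) = {x : |x - ξ| ≤ rW}` in the band graph `Γ_{1,W}`. -/
noncomputable def bandBall (ξ : ℤ) (r W : ℕ) : Finset ℤ :=
  Finset.Icc (ξ - (r * W : ℕ)) (ξ + (r * W : ℕ))

/-- The (negative) Dirichlet Laplacian `-Δ_W^{B_r}` of the 1D band graph on `B_r(ξ)`,
as a matrix: `2W` on the diagonal and `-1` at `(x,y)` with `0 < |x-y| ≤ W`. -/
def bandMat (ξ : ℤ) (r W : ℕ) : Matrix (bandBall ξ r W) (bandBall ξ r W) ℝ :=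
  fun x y =>
    (if (x : ℤ) = (y : ℤ) then (2 * W : ℝ) else 0) -
      (if 0 < |(x : ℤ) - (y : ℤ)| ∧ |(x : ℤ) - (y : ℤ)| ≤ (W : ℤ) then 1 else 0)

/-- The center `ξ` as an element of `B_r(ξ)`. -/
def bandCtr (ξ : ℤ) (r W : ℕ) : (bandBall ξ r W : Finset ℤ) :=
  ⟨ξ, by simp only [bandBall, Finset.mem_Icc]; omega⟩

/-- The Poisson kernel `P_r(ξ,x) = Σ_{y ∈ B_r(ξ), 0 < |x-y| ≤ W} G_r(ξ,y)` of the 1D band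
model, defined for `x` in the exterior boundary of `B_r(ξ)`. -/
noncomputable def bandPoisson (ξ : ℤ) (r W : ℕ) (x : ℤ) : ℝ :=
  ∑ y : (bandBall ξ r W : Finset ℤ),
    if 0 < |x - (y : ℤ)| ∧ |x - (y : ℤ)| ≤ (W : ℤ) then
      (bandMat ξ r W)⁻¹ (bandCtr ξ r W) y
    else 0


noncomputable def Ssum (W : ℕ) (d : ℤ) : ℤ := ∑ j ∈ Finset.Icc (-(W:ℤ)) W, |d + j|

lemma Ssum_zero (d : ℤ) : Ssum 0 d = |d| := by
  simp [Ssum]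

lemma Icc_succ (W : ℕ) :
    Finset.Icc (-(W+1:ℤ)) (W+1) =
      insert (-(W+1:ℤ)) (insert ((W:ℤ)+1) (Finset.Icc (-(W:ℤ)) W)) := by
  ext z
  simp only [Finset.mem_Icc, Finset.mem_insert]
  omega

lemma Ssum_succ (W : ℕ) (d : ℤ) :
    Ssum (W+1) d = Ssum W d + |d + (W+1)| + |d - (W+1)| := by
  have h : Ssum (W+1) d = ∑ j ∈ Finset.Icc (-(W+1:ℤ)) (W+1), |d + j| := by
    unfold Ssum
    congr 2 <;> push_cast <;> ring
  rw [h, Icc_succ]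
  rw [Finset.sum_insert (by simp only [Finset.mem_insert, Finset.mem_Icc]; omega),
      Finset.sum_insert (by simp only [Finset.mem_Icc]; omega)]
  have h2 : d + -((W:ℤ)+1) = d - (W+1) := by ring
  rw [h2]
  unfold Ssum
  ring

lemma Ssum_far (W : ℕ) : ∀ d : ℤ, (W:ℤ) ≤ |d| → Ssum W d = (2*W+1) * |d| := by
  induction W with
  | zero => intro d _; simp [Ssum_zero]
  | succ W ih =>
    intro d hd
    rw [Ssum_succ, ih d (by push_cast at hd ⊢; omega)]
    push_cast at hd ⊢
    rcases abs_cases d with ⟨h1, h2⟩ | ⟨h1, h2⟩ <;>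
      rw [h1] at hd ⊢ <;>
      [rw [abs_of_nonneg (by omega), abs_of_nonneg (by omega)];
       rw [abs_of_nonpos (by omega), abs_of_nonpos (by omega)]] <;> ring

lemma Ssum_mid (W : ℕ) : ∀ d : ℤ, d ≠ 0 → Ssum W d ≤ (2*W+1) * |d| + W*(W-1) := by
  induction W with
  | zero => intro d _; simp [Ssum_zero]
  | succ W ih =>
    intro d hd
    rw [Ssum_succ]
    have h := ih d hd
    push_cast at h ⊢
    have habs : |d + ((W:ℤ)+1)| + |d - ((W:ℤ)+1)| ≤ 2*|d| + 2*(W:ℤ) := by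
      rcases abs_cases d with ⟨h1, h2⟩ | ⟨h1, h2⟩ <;>
        rcases abs_cases (d + ((W:ℤ)+1)) with ⟨h3, h4⟩ | ⟨h3, h4⟩ <;>
        rcases abs_cases (d - ((W:ℤ)+1)) with ⟨h5, h6⟩ | ⟨h5, h6⟩ <;> omega
    nlinarith [abs_nonneg d]

lemma Ssum_ctr (W : ℕ) : Ssum W 0 ≤ (W:ℤ)*(W+1) := by
  induction W with
  | zero => simp [Ssum_zero]
  | succ W ih =>
    rw [Ssum_succ]
    push_cast
    rw [abs_of_nonneg (by omega), abs_of_nonpos (by omega)]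
    push_cast at ih
    nlinarith

section Row
variable (W r : ℕ) (ξ : ℤ)

/-- tent value -/
def tv (z : ℤ) : ℤ := ((r:ℤ)*W + 1) - |z - ξ|

/-- quadratic bonus -/
def bonus (y : ℤ) : ℤ :=
  if y = ξ then (W:ℤ)*(W+1) else if |y - ξ| ≤ (W:ℤ) then (W:ℤ)*((W:ℤ)-1) else 0

lemma tv_nonpos {z : ℤ} (hz : ¬(ξ - (r:ℤ)*W ≤ z ∧ z ≤ ξ + (r:ℤ)*W)) : tv W r ξ z ≤ 0 := by
  unfold tv
  rw [Int.abs_eq_natAbs]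
  generalize (r:ℤ)*W = R at *
  omega

/-- The key per-row integer inequality. -/
lemma rowBound (hW : 1 ≤ W) (hr : 1 ≤ r) (y : ℤ)
    (hy : y ∈ Finset.Icc (ξ - (r:ℤ)*W) (ξ + (r:ℤ)*W)) :
    2*(W:ℤ) * tv W r ξ y ≤
      (∑ z ∈ Finset.Icc (ξ - (r:ℤ)*W) (ξ + (r:ℤ)*W),
        if 0 < |y - z| ∧ |y - z| ≤ (W:ℤ) then tv W r ξ z else 0) + bonus W ξ y := by
  rw [Finset.mem_Icc] at hy
  set B := Finset.Icc (ξ - (r:ℤ)*W) (ξ + (r:ℤ)*W) with hB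
  set I := Finset.Icc (y - (W:ℤ)) (y + (W:ℤ)) with hI
  set F : ℤ → ℤ := fun z =>
    if (ξ - (r:ℤ)*W ≤ z ∧ z ≤ ξ + (r:ℤ)*W ∧ 0 < |y - z| ∧ |y - z| ≤ (W:ℤ)) then tv W r ξ z else 0
    with hF
  have hmemB : ∀ z, z ∈ B ↔ ξ - (r:ℤ)*W ≤ z ∧ z ≤ ξ + (r:ℤ)*W := by
    intro z; rw [hB, Finset.mem_Icc]
  have hmemI : ∀ z, z ∈ I ↔ y - (W:ℤ) ≤ z ∧ z ≤ y + (W:ℤ) := by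
    intro z; rw [hI, Finset.mem_Icc]
  -- Step A : rewrite Tsum as sum of F over B
  have stepA : (∑ z ∈ B, if 0 < |y - z| ∧ |y - z| ≤ (W:ℤ) then tv W r ξ z else 0)
      = ∑ z ∈ B, F z := by
    apply Finset.sum_congr rfl
    intro z hz
    rw [hmemB] at hz
    rw [hF]
    simp only [hz.1, hz.2, true_and]
  -- Step B : sum of F over B equals sum over I
  have e1 : ∑ z ∈ B ∩ I, F z = ∑ z ∈ B, F z := by
    apply Finset.sum_subset Finset.inter_subset_left
    intro z hzB hz
    rw [Finset.mem_inter] at hz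
    have hzI : z ∉ I := fun h => hz ⟨hzB, h⟩
    rw [hmemI] at hzI
    rw [hF]
    simp only [ite_eq_right_iff]
    rintro ⟨h1, h2, h3, h4⟩
    rw [Int.abs_eq_natAbs] at h3 h4
    omega
  have e2 : ∑ z ∈ B ∩ I, F z = ∑ z ∈ I, F z := by
    apply Finset.sum_subset Finset.inter_subset_right
    intro z hzI hz
    rw [Finset.mem_inter] at hz
    have hzB : z ∉ B := fun h => hz ⟨h, hzI⟩
    rw [hmemB] at hzB
    rw [hF]
    simp only [ite_eq_right_iff]
    rintro ⟨h1, h2, h3, h4⟩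
    exact absurd ⟨h1, h2⟩ hzB
  -- Step C : pointwise lower bound on I
  have stepC : (∑ z ∈ I, if z ≠ y then tv W r ξ z else 0) ≤ ∑ z ∈ I, F z := by
    apply Finset.sum_le_sum
    intro z hz
    rw [hmemI] at hz
    by_cases hzy : z = y
    · subst hzy
      simp [hF]
    · simp only [ne_eq, hzy, not_false_eq_true, if_true]
      by_cases hzB : ξ - (r:ℤ)*W ≤ z ∧ z ≤ ξ + (r:ℤ)*W
      · have h3 : 0 < |y - z| := by rw [Int.abs_eq_natAbs]; omega
        have h4 : |y - z| ≤ (W:ℤ) := by rw [Int.abs_eq_natAbs]; omega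
        simp only [hF]
        rw [if_pos ⟨hzB.1, hzB.2, h3, h4⟩]
      · have hF0 : F z = 0 := by
          rw [hF]
          simp only [ite_eq_right_iff]
          rintro ⟨h1, h2, _, _⟩
          exact absurd ⟨h1, h2⟩ hzB
        rw [hF0]
        exact tv_nonpos W r ξ hzB
  -- Step D : the erased sum identity
  have hyI : y ∈ I := by rw [hmemI]; omega
  have stepD : (∑ z ∈ I, if z ≠ y then tv W r ξ z else 0)
      = (∑ z ∈ I, tv W r ξ z) - tv W r ξ y := by
    rw [← Finset.sum_filter, Finset.filter_ne', Finset.sum_erase_eq_sub hyI]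
  -- Step E : the interval sum via Ssum
  have stepE : (∑ z ∈ I, tv W r ξ z)
      = (2*(W:ℤ)+1) * ((r:ℤ)*W + 1) - Ssum W (y - ξ) := by
    have hcard : (I.card : ℤ) = 2*(W:ℤ)+1 := by
      rw [hI, Int.card_Icc]
      have : (y + (W:ℤ) + 1 - (y - W)) = 2*(W:ℤ)+1 := by ring
      rw [this]
      rw [Int.toNat_of_nonneg (by omega)]
    have hre : ∑ z ∈ I, |z - ξ| = Ssum W (y - ξ) := by
      have : I = Finset.Icc (y + -(W:ℤ)) (y + (W:ℤ)) := by rw [hI]; ring_nf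
      rw [this, ← Finset.map_add_left_Icc, Finset.sum_map]
      unfold Ssum
      apply Finset.sum_congr rfl
      intro j hj
      have : (addLeftEmbedding y) j = y + j := rfl
      rw [this]
      congr 1
      ring
    unfold tv
    rw [Finset.sum_sub_distrib, Finset.sum_const, hre]
    push_cast [hcard]
    ring_nf
    rw [hcard]  -- may fail; fix below
    ring
  -- Step K : Ssum bound with bonus
  have key : Ssum W (y - ξ) ≤ (2*(W:ℤ)+1) * |y - ξ| + bonus W ξ y := by
    unfold bonus
    by_cases h0 : y = ξ
    · subst h0
      simp only [sub_self, abs_zero, mul_zero, if_pos rfl, zero_add]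
      exact Ssum_ctr W
    · rw [if_neg h0]
      by_cases h1 : |y - ξ| ≤ (W:ℤ)
      · rw [if_pos h1]
        exact Ssum_mid W _ (by intro h; apply h0; omega)
      · rw [if_neg h1]
        rw [Ssum_far W _ (by omega)]
        omega
  have hT : (2*(W:ℤ)+1) * ((r:ℤ)*W + 1) - Ssum W (y - ξ) - tv W r ξ y
      ≤ ∑ z ∈ B, if 0 < |y - z| ∧ |y - z| ≤ (W:ℤ) then tv W r ξ z else 0 := by
    rw [stepA, ← e1, e2, ← stepE, ← stepD]
    exact stepC
  have htv : tv W r ξ y = ((r:ℤ)*W + 1) - |y - ξ| := rfl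
  rw [htv] at hT ⊢
  linarith [hT, key]
end Row

section Mat
open Matrix
variable (W r : ℕ) (ξ : ℤ)

lemma mem_ball_iff (z : ℤ) :
    z ∈ bandBall ξ r W ↔ ξ - (r:ℤ)*W ≤ z ∧ z ≤ ξ + (r:ℤ)*W := by
  simp only [bandBall, Finset.mem_Icc]
  push_cast
  omega

lemma rowExpand (f : ↥(bandBall ξ r W) → ℝ) (y : ↥(bandBall ξ r W)) :
    (bandMat ξ r W).mulVec f y
      = 2*(W:ℝ) * f y - ∑ z : ↥(bandBall ξ r W),
          if 0 < |(y:ℤ) - (z:ℤ)| ∧ |(y:ℤ) - (z:ℤ)| ≤ (W:ℤ) then f z else 0 := by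
  unfold Matrix.mulVec dotProduct bandMat
  simp only [sub_mul, ite_mul, one_mul, zero_mul, Finset.sum_sub_distrib]
  congr 1
  have h1 : ∀ z : ↥(bandBall ξ r W),
      (if ((y:ℤ) = (z:ℤ)) then (2*(W:ℝ)) * f z else 0)
        = if y = z then 2*(W:ℝ) * f z else 0 := by
    intro z
    by_cases h : y = z
    · rw [if_pos h, if_pos (by rw [h])]
    · rw [if_neg h, if_neg (fun hc => h (Subtype.ext hc))]
  rw [Finset.sum_congr rfl (fun z _ => h1 z), Finset.sum_ite_eq]
  simp

/-- counting: the indicator sum over the ball equals a filter card -/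
lemma cnt_eq (y : ℤ) :
    (∑ z : ↥(bandBall ξ r W), if 0 < |y - (z:ℤ)| ∧ |y - (z:ℤ)| ≤ (W:ℤ) then (1:ℝ) else 0)
      = ((bandBall ξ r W).filter
          (fun z => 0 < |y - z| ∧ |y - z| ≤ (W:ℤ))).card := by
  rw [Finset.sum_coe_sort (bandBall ξ r W)
      (fun z : ℤ => if 0 < |y - z| ∧ |y - z| ≤ (W:ℤ) then (1:ℝ) else 0)]
  rw [Finset.sum_boole]

lemma cnt_le_two (y : ℤ) :
    (∑ z : ↥(bandBall ξ r W), if 0 < |y - (z:ℤ)| ∧ |y - (z:ℤ)| ≤ (W:ℤ) then (1:ℝ) else 0)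
      ≤ 2*(W:ℝ) := by
  rw [cnt_eq]
  have hsub : (bandBall ξ r W).filter (fun z => 0 < |y - z| ∧ |y - z| ≤ (W:ℤ))
      ⊆ (Finset.Icc (y - (W:ℤ)) (y + (W:ℤ))).erase y := by
    intro z hz
    rw [Finset.mem_filter] at hz
    rw [Finset.mem_erase, Finset.mem_Icc]
    obtain ⟨ha, hb⟩ := hz.2
    rcases abs_cases (y - z) with ⟨h1, h2⟩ | ⟨h1, h2⟩ <;> omega
  have hcard := Finset.card_le_card hsub
  have : ((Finset.Icc (y - (W:ℤ)) (y + (W:ℤ))).erase y).card ≤ 2*W := by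
    have hy : y ∈ Finset.Icc (y - (W:ℤ)) (y + (W:ℤ)) := by
      rw [Finset.mem_Icc]; omega
    rw [Finset.card_erase_of_mem hy, Int.card_Icc]
    omega
  have h2 : ((bandBall ξ r W).filter
      (fun z => 0 < |y - z| ∧ |y - z| ≤ (W:ℤ))).card ≤ 2*W := le_trans hcard this
  calc (((bandBall ξ r W).filter
      (fun z => 0 < |y - z| ∧ |y - z| ≤ (W:ℤ))).card : ℝ) ≤ ((2*W : ℕ) : ℝ) := by
        exact_mod_cast h2
    _ = 2*(W:ℝ) := by push_cast; ring

lemma mono (hW : 1 ≤ W) (f : ↥(bandBall ξ r W) → ℝ)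
    (hf : ∀ y, 0 ≤ (bandMat ξ r W).mulVec f y) : ∀ y, 0 ≤ f y := by
  haveI : Nonempty ↥(bandBall ξ r W) := ⟨bandCtr ξ r W⟩
  by_contra hc
  push_neg at hc
  obtain ⟨w, hw⟩ := hc
  obtain ⟨y₁, -, hy₁⟩ := Finset.exists_min_image Finset.univ f ⟨w, Finset.mem_univ w⟩
  set m := f y₁ with hm
  have hmneg : m < 0 := lt_of_le_of_lt (hy₁ w (Finset.mem_univ w)) hw
  have hglob : ∀ z, m ≤ f z := fun z => hy₁ z (Finset.mem_univ z)
  set T := Finset.univ.filter (fun z : ↥(bandBall ξ r W) => f z = m) with hT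
  have hTne : T.Nonempty := ⟨y₁, by simp [hT, hm]⟩
  obtain ⟨y₀, hy₀T, hy₀min⟩ := Finset.exists_min_image T (fun z => (z:ℤ)) hTne
  have hfy₀ : f y₀ = m := (Finset.mem_filter.mp hy₀T).2
  have hrow := hf y₀
  rw [rowExpand] at hrow
  set Sf := ∑ z : ↥(bandBall ξ r W),
      if 0 < |(y₀:ℤ) - (z:ℤ)| ∧ |(y₀:ℤ) - (z:ℤ)| ≤ (W:ℤ) then f z else 0 with hSfdef
  set cnt := ∑ z : ↥(bandBall ξ r W),
      if 0 < |(y₀:ℤ) - (z:ℤ)| ∧ |(y₀:ℤ) - (z:ℤ)| ≤ (W:ℤ) then (1:ℝ) else 0 with hcnt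
  have hpt : ∀ z : ↥(bandBall ξ r W),
      (if 0 < |(y₀:ℤ) - (z:ℤ)| ∧ |(y₀:ℤ) - (z:ℤ)| ≤ (W:ℤ) then (1:ℝ) else 0) * m
        ≤ (if 0 < |(y₀:ℤ) - (z:ℤ)| ∧ |(y₀:ℤ) - (z:ℤ)| ≤ (W:ℤ) then f z else 0) := by
    intro z
    by_cases h : 0 < |(y₀:ℤ) - (z:ℤ)| ∧ |(y₀:ℤ) - (z:ℤ)| ≤ (W:ℤ)
    · rw [if_pos h, if_pos h, one_mul]; exact hglob z
    · rw [if_neg h, if_neg h, zero_mul]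
  have hcnt2 : cnt ≤ 2*(W:ℝ) := cnt_le_two W r ξ (y₀:ℤ)
  have hcntnn : 0 ≤ cnt := by
    rw [hcnt]
    apply Finset.sum_nonneg
    intro z _
    split <;> norm_num
  by_cases hleft : (y₀:ℤ) = ξ - (r:ℤ)*W
  · -- leftmost point : at most W neighbours
    have hWle : cnt ≤ (W:ℝ) := by
      rw [hcnt, cnt_eq]
      have hsub : (bandBall ξ r W).filter
          (fun z => 0 < |(y₀:ℤ) - z| ∧ |(y₀:ℤ) - z| ≤ (W:ℤ))
          ⊆ Finset.Icc ((y₀:ℤ) + 1) ((y₀:ℤ) + (W:ℤ)) := by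
        intro z hz
        rw [Finset.mem_filter, mem_ball_iff] at hz
        rw [Finset.mem_Icc]
        obtain ⟨⟨hm1, hm2⟩, ha, hb⟩ := hz
        rcases abs_cases ((y₀:ℤ) - z) with ⟨h1, h2⟩ | ⟨h1, h2⟩ <;> omega
      have hcard := Finset.card_le_card hsub
      rw [Int.card_Icc] at hcard
      have h2 : ((bandBall ξ r W).filter
          (fun z => 0 < |(y₀:ℤ) - z| ∧ |(y₀:ℤ) - z| ≤ (W:ℤ))).card ≤ W := by omega
      calc (((bandBall ξ r W).filter
          (fun z => 0 < |(y₀:ℤ) - z| ∧ |(y₀:ℤ) - z| ≤ (W:ℤ))).card : ℝ)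
          ≤ ((W:ℕ) : ℝ) := by exact_mod_cast h2
        _ = (W:ℝ) := rfl
    have hSfge : m * cnt ≤ Sf := by
      rw [hSfdef, hcnt, Finset.mul_sum]
      apply Finset.sum_le_sum
      intro z _
      rw [mul_comm]
      exact hpt z
    have hW1 : (1:ℝ) ≤ (W:ℝ) := by exact_mod_cast hW
    rw [hfy₀] at hrow
    nlinarith [hrow, hSfge, hWle, hmneg, hW1, hcntnn]
  · -- otherwise the left neighbour also attains the minimum : contradiction
    have hy₀mem := (mem_ball_iff W r ξ (y₀:ℤ)).mp y₀.2
    have hz'mem : ((y₀:ℤ) - 1) ∈ bandBall ξ r W := by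
      rw [mem_ball_iff]
      omega
    set z' : ↥(bandBall ξ r W) := ⟨(y₀:ℤ) - 1, hz'mem⟩ with hz'
    have hz'ne : f z' ≠ m := by
      intro h
      have hz'T : z' ∈ T := by
        rw [hT, Finset.mem_filter]
        exact ⟨Finset.mem_univ _, h⟩
      have := hy₀min z' hz'T
      rw [hz'] at this
      simp at this
    have hz'gt : m < f z' := lt_of_le_of_ne (hglob z') (fun h => hz'ne h.symm)
    have hadj : 0 < |(y₀:ℤ) - (z':ℤ)| ∧ |(y₀:ℤ) - (z':ℤ)| ≤ (W:ℤ) := by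
      have hco : (z' : ℤ) = (y₀:ℤ) - 1 := rfl
      have hone : (y₀:ℤ) - ((y₀:ℤ) - 1) = 1 := by ring
      rw [hco, hone]
      refine ⟨by norm_num, ?_⟩
      rw [abs_one]
      exact_mod_cast hW
    have hSfgt : m * cnt < Sf := by
      rw [hSfdef, hcnt, Finset.mul_sum]
      apply Finset.sum_lt_sum
      · intro z _
        rw [mul_comm]
        exact hpt z
      · refine ⟨z', Finset.mem_univ _, ?_⟩
        rw [mul_comm, if_pos hadj, if_pos hadj, one_mul]
        exact hz'gt
    rw [hfy₀] at hrow
    nlinarith [hrow, hSfgt, hcnt2, hmneg]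

lemma band_det_unit (hW : 1 ≤ W) : IsUnit (bandMat ξ r W).det := by
  haveI : Nonempty ↥(bandBall ξ r W) := ⟨bandCtr ξ r W⟩
  rw [isUnit_iff_ne_zero]
  intro hdet
  obtain ⟨v, hv0, hv⟩ := (Matrix.exists_mulVec_eq_zero_iff).mpr hdet
  apply hv0
  funext i
  have h1 : ∀ y, 0 ≤ (bandMat ξ r W).mulVec v y := by
    rw [hv]; intro y; simp
  have h2 : ∀ y, 0 ≤ (bandMat ξ r W).mulVec (-v) y := by
    intro y
    rw [Matrix.mulVec_neg, hv]
    simp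
  have hp := mono W r ξ hW v h1 i
  have hn := mono W r ξ hW (-v) h2 i
  simp only [Pi.neg_apply, Pi.zero_apply] at hp hn ⊢
  linarith

lemma band_inv_col (hW : 1 ≤ W) (j : ↥(bandBall ξ r W)) :
    (bandMat ξ r W).mulVec (fun i => (bandMat ξ r W)⁻¹ i j) = Pi.single j 1 := by
  have h : (fun i => (bandMat ξ r W)⁻¹ i j) = (bandMat ξ r W)⁻¹ *ᵥ Pi.single j 1 := by
    rw [Matrix.mulVec_single]
    simp
    rfl
  rw [h, Matrix.mulVec_mulVec, Matrix.mul_nonsing_inv _ (band_det_unit W r ξ hW),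
    Matrix.one_mulVec]

lemma band_inv_nonneg (hW : 1 ≤ W) (i j : ↥(bandBall ξ r W)) :
    0 ≤ (bandMat ξ r W)⁻¹ i j := by
  apply mono W r ξ hW (fun i => (bandMat ξ r W)⁻¹ i j)
  intro y
  rw [band_inv_col W r ξ hW j]
  by_cases h : y = j
  · subst h; simp
  · rw [Pi.single_apply, if_neg h]

lemma band_inv_symm (i j : ↥(bandBall ξ r W)) :
    (bandMat ξ r W)⁻¹ i j = (bandMat ξ r W)⁻¹ j i := by
  have hsym : (bandMat ξ r W)ᵀ = bandMat ξ r W := by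
    ext a b
    rw [Matrix.transpose_apply]
    unfold bandMat
    rw [abs_sub_comm (b:ℤ) (a:ℤ)]
    congr 1
    simp [eq_comm]
  have h := Matrix.transpose_nonsing_inv (bandMat ξ r W)
  rw [hsym] at h
  calc (bandMat ξ r W)⁻¹ i j = ((bandMat ξ r W)⁻¹)ᵀ j i := rfl
    _ = (bandMat ξ r W)⁻¹ j i := by rw [h]

lemma band_upper (hW : 1 ≤ W) (x : ℤ) (hx : x ∉ bandBall ξ r W) :
    (∑ y : ↥(bandBall ξ r W),
      if 0 < |x - (y:ℤ)| ∧ |x - (y:ℤ)| ≤ (W:ℤ) then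
        (bandMat ξ r W)⁻¹ (bandCtr ξ r W) y else 0) ≤ 1 := by
  set c := bandCtr ξ r W with hc
  have hstep1 : ∀ y : ↥(bandBall ξ r W),
      (if 0 < |x - (y:ℤ)| ∧ |x - (y:ℤ)| ≤ (W:ℤ) then (bandMat ξ r W)⁻¹ c y else 0)
        ≤ (bandMat ξ r W)⁻¹ c y * ((bandMat ξ r W).mulVec (fun _ => (1:ℝ))) y := by
    intro y
    have hGnn : 0 ≤ (bandMat ξ r W)⁻¹ c y := band_inv_nonneg W r ξ hW c y
    have hexp : ((bandMat ξ r W).mulVec (fun _ => (1:ℝ))) y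
        = 2*(W:ℝ) - ∑ z : ↥(bandBall ξ r W),
            (if 0 < |(y:ℤ) - (z:ℤ)| ∧ |(y:ℤ) - (z:ℤ)| ≤ (W:ℤ) then (1:ℝ) else 0) := by
      rw [rowExpand]; ring
    by_cases hcond : 0 < |x - (y:ℤ)| ∧ |x - (y:ℤ)| ≤ (W:ℤ)
    · rw [if_pos hcond]
      obtain ⟨hc1, hc2⟩ := hcond
      have hcnt : (∑ z : ↥(bandBall ξ r W),
          if 0 < |(y:ℤ) - (z:ℤ)| ∧ |(y:ℤ) - (z:ℤ)| ≤ (W:ℤ) then (1:ℝ) else 0)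
          ≤ 2*(W:ℝ) - 1 := by
        rw [cnt_eq]
        have hyIcc : (y:ℤ) ∈ Finset.Icc ((y:ℤ)-(W:ℤ)) ((y:ℤ)+(W:ℤ)) := by
          rw [Finset.mem_Icc]; omega
        have hxIcc : x ∈ (Finset.Icc ((y:ℤ)-(W:ℤ)) ((y:ℤ)+(W:ℤ))).erase (y:ℤ) := by
          rw [Finset.mem_erase, Finset.mem_Icc]
          rcases abs_cases (x - (y:ℤ)) with ⟨h1, h2⟩ | ⟨h1, h2⟩ <;>
            exact ⟨by omega, by omega⟩
        have hsub : (bandBall ξ r W).filter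
            (fun z => 0 < |(y:ℤ) - z| ∧ |(y:ℤ) - z| ≤ (W:ℤ))
            ⊆ ((Finset.Icc ((y:ℤ)-(W:ℤ)) ((y:ℤ)+(W:ℤ))).erase (y:ℤ)).erase x := by
          intro z hz
          rw [Finset.mem_filter] at hz
          obtain ⟨hzball, ha, hb⟩ := hz
          rw [Finset.mem_erase, Finset.mem_erase, Finset.mem_Icc]
          refine ⟨fun heq => hx (heq ▸ hzball), ?_, ?_⟩
          · rcases abs_cases ((y:ℤ) - z) with ⟨h1, h2⟩ | ⟨h1, h2⟩ <;> omega
          · rcases abs_cases ((y:ℤ) - z) with ⟨h1, h2⟩ | ⟨h1, h2⟩ <;>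
              exact ⟨by omega, by omega⟩
        have hcard := Finset.card_le_card hsub
        rw [Finset.card_erase_of_mem hxIcc, Finset.card_erase_of_mem hyIcc,
          Int.card_Icc] at hcard
        have hcard2 : ((bandBall ξ r W).filter
            (fun z => 0 < |(y:ℤ) - z| ∧ |(y:ℤ) - z| ≤ (W:ℤ))).card ≤ 2*W - 1 := by
          omega
        calc (((bandBall ξ r W).filter
            (fun z => 0 < |(y:ℤ) - z| ∧ |(y:ℤ) - z| ≤ (W:ℤ))).card : ℝ)
            ≤ ((2*W - 1 : ℕ) : ℝ) := by exact_mod_cast hcard2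
          _ = 2*(W:ℝ) - 1 := by
              have : (1:ℕ) ≤ 2*W := by omega
              push_cast [this]
              ring
      rw [hexp]
      nlinarith [hGnn, hcnt]
    · rw [if_neg hcond]
      have hcnt2 := cnt_le_two W r ξ (y:ℤ)
      rw [hexp]
      nlinarith [hGnn, hcnt2]
  have hsum := Finset.sum_le_sum (fun y (_ : y ∈ Finset.univ) => hstep1 y)
  have heval : (∑ y : ↥(bandBall ξ r W),
      (bandMat ξ r W)⁻¹ c y * ((bandMat ξ r W).mulVec (fun _ => (1:ℝ))) y) = 1 := by
    have h1 : ∀ y : ↥(bandBall ξ r W), ((bandMat ξ r W).mulVec (fun _ => (1:ℝ))) y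
        = ∑ z : ↥(bandBall ξ r W), bandMat ξ r W y z := by
      intro y
      unfold Matrix.mulVec dotProduct
      simp
    calc (∑ y : ↥(bandBall ξ r W),
          (bandMat ξ r W)⁻¹ c y * ((bandMat ξ r W).mulVec (fun _ => (1:ℝ))) y)
        = ∑ y : ↥(bandBall ξ r W), ∑ z : ↥(bandBall ξ r W),
            (bandMat ξ r W)⁻¹ c y * bandMat ξ r W y z := by
          apply Finset.sum_congr rfl
          intro y _
          rw [h1, Finset.mul_sum]
      _ = ∑ z : ↥(bandBall ξ r W), ∑ y : ↥(bandBall ξ r W),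
            (bandMat ξ r W)⁻¹ c y * bandMat ξ r W y z := Finset.sum_comm
      _ = ∑ z : ↥(bandBall ξ r W), ((bandMat ξ r W)⁻¹ * bandMat ξ r W) c z := by
          apply Finset.sum_congr rfl
          intro z _
          rw [Matrix.mul_apply]
      _ = ∑ z : ↥(bandBall ξ r W), (1 : Matrix _ _ ℝ) c z := by
          rw [Matrix.nonsing_inv_mul _ (band_det_unit W r ξ hW)]
      _ = 1 := by
          simp [Matrix.one_apply]
  calc (∑ y : ↥(bandBall ξ r W),
      if 0 < |x - (y:ℤ)| ∧ |x - (y:ℤ)| ≤ (W:ℤ) then (bandMat ξ r W)⁻¹ c y else 0)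
      ≤ ∑ y : ↥(bandBall ξ r W),
          (bandMat ξ r W)⁻¹ c y * ((bandMat ξ r W).mulVec (fun _ => (1:ℝ))) y := hsum
    _ = 1 := heval

lemma ball_eq : bandBall ξ r W = Finset.Icc (ξ - (r:ℤ)*W) (ξ + (r:ℤ)*W) := by
  unfold bandBall
  congr 1 <;> push_cast <;> ring

/-- The `ℤ`-valued neighbour sum, as in `rowBound`. -/
noncomputable def TZ (y : ℤ) : ℤ :=
  ∑ z ∈ Finset.Icc (ξ - (r:ℤ)*W) (ξ + (r:ℤ)*W),
    if 0 < |y - z| ∧ |y - z| ≤ (W:ℤ) then tv W r ξ z else 0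

lemma band_lower_at (hW : 1 ≤ W) (hr : 1 ≤ r) (x : ℤ) (b : ↥(bandBall ξ r W))
    (hbx : 0 < |x - (b:ℤ)| ∧ |x - (b:ℤ)| ≤ (W:ℤ)) (htvb : tv W r ξ (b:ℤ) = 1)
    (hbξ : (b:ℤ) ≠ ξ) :
    1/(2*(W:ℝ)^3) ≤ ∑ y : ↥(bandBall ξ r W),
      if 0 < |x - (y:ℤ)| ∧ |x - (y:ℤ)| ≤ (W:ℤ) then
        (bandMat ξ r W)⁻¹ (bandCtr ξ r W) y else 0 := by
  have hW1 : (1:ℝ) ≤ (W:ℝ) := by exact_mod_cast hW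
  set D : ℝ := (W:ℝ) * (2*(W:ℝ)^2 - (W:ℝ) + 1) with hD
  have hDpos : 0 < D := by rw [hD]; nlinarith
  set α : ℝ := D⁻¹ with hα
  have hαpos : 0 < α := inv_pos.mpr hDpos
  have hα1 : α * D = 1 := inv_mul_cancel₀ (ne_of_gt hDpos)
  set γ : ℝ := α * ((W:ℝ)^2 - (W:ℝ)) with hγ
  set c := bandCtr ξ r W with hc
  have hcξ : (c:ℤ) = ξ := rfl
  set uu : ↥(bandBall ξ r W) → ℝ :=
    fun y => α * ((tv W r ξ (y:ℤ) : ℤ) : ℝ) + (if (y:ℤ) = ξ then γ else 0) with huu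
  have hzc : ∀ z : ↥(bandBall ξ r W), ((z:ℤ) = ξ) ↔ z = c := by
    intro z
    constructor
    · intro h; exact Subtype.ext h
    · intro h; rw [h]; exact hcξ
  -- split off the neighbour sum of uu
  have hsplit : ∀ y : ↥(bandBall ξ r W),
      (∑ z : ↥(bandBall ξ r W),
        if 0 < |(y:ℤ) - (z:ℤ)| ∧ |(y:ℤ) - (z:ℤ)| ≤ (W:ℤ) then uu z else 0)
      = α * ((TZ W r ξ (y:ℤ) : ℤ) : ℝ)
        + (if 0 < |(y:ℤ) - ξ| ∧ |(y:ℤ) - ξ| ≤ (W:ℤ) then γ else 0) := by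
    intro y
    have hpt : ∀ z : ↥(bandBall ξ r W),
        (if 0 < |(y:ℤ) - (z:ℤ)| ∧ |(y:ℤ) - (z:ℤ)| ≤ (W:ℤ) then uu z else 0)
        = α * (if 0 < |(y:ℤ) - (z:ℤ)| ∧ |(y:ℤ) - (z:ℤ)| ≤ (W:ℤ) then
            ((tv W r ξ (z:ℤ) : ℤ) : ℝ) else 0)
          + (if z = c then
              (if 0 < |(y:ℤ) - (z:ℤ)| ∧ |(y:ℤ) - (z:ℤ)| ≤ (W:ℤ) then γ else 0) else 0) := by
      intro z
      by_cases h : 0 < |(y:ℤ) - (z:ℤ)| ∧ |(y:ℤ) - (z:ℤ)| ≤ (W:ℤ)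
      · rw [if_pos h, if_pos h, if_pos h]
        simp only [huu]
        by_cases h2 : z = c
        · rw [if_pos h2, if_pos ((hzc z).mpr h2)]
        · rw [if_neg h2, if_neg (fun hc2 => h2 ((hzc z).mp hc2))]
      · rw [if_neg h, if_neg h, if_neg h, mul_zero, ite_self, add_zero]
    rw [Finset.sum_congr rfl (fun z _ => hpt z), Finset.sum_add_distrib, ← Finset.mul_sum]
    congr 1
    · congr 1
      have hcast : ∀ z : ↥(bandBall ξ r W),
          (if 0 < |(y:ℤ) - (z:ℤ)| ∧ |(y:ℤ) - (z:ℤ)| ≤ (W:ℤ) then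
            ((tv W r ξ (z:ℤ) : ℤ) : ℝ) else 0)
          = (((if 0 < |(y:ℤ) - (z:ℤ)| ∧ |(y:ℤ) - (z:ℤ)| ≤ (W:ℤ) then
              tv W r ξ (z:ℤ) else 0) : ℤ) : ℝ) := by
        intro z
        rw [apply_ite (Int.cast : ℤ → ℝ)]
        norm_num
      rw [Finset.sum_congr rfl (fun z _ => hcast z), ← Int.cast_sum]
      congr 1
      unfold TZ
      rw [← ball_eq]
      exact Finset.sum_coe_sort (bandBall ξ r W)
        (fun z : ℤ => if 0 < |(y:ℤ) - z| ∧ |(y:ℤ) - z| ≤ (W:ℤ) then tv W r ξ z else 0)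
    · rw [Finset.sum_ite_eq' Finset.univ c
        (fun z => if 0 < |(y:ℤ) - (z:ℤ)| ∧ |(y:ℤ) - (z:ℤ)| ≤ (W:ℤ) then γ else 0),
        if_pos (Finset.mem_univ c), hcξ]
  -- the row claim
  have hrowclaim : ∀ y : ↥(bandBall ξ r W),
      (bandMat ξ r W).mulVec uu y ≤ (if y = c then 1 else 0) := by
    intro y
    rw [rowExpand, hsplit y]
    have hymem : (y:ℤ) ∈ Finset.Icc (ξ - (r:ℤ)*W) (ξ + (r:ℤ)*W) := by
      rw [← ball_eq]; exact y.2
    have hrB := rowBound W r ξ hW hr (y:ℤ) hymem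
    have hTZdef : TZ W r ξ (y:ℤ)
        = ∑ z ∈ Finset.Icc (ξ - (r:ℤ)*W) (ξ + (r:ℤ)*W),
            if 0 < |(y:ℤ) - z| ∧ |(y:ℤ) - z| ≤ (W:ℤ) then tv W r ξ z else 0 := rfl
    rw [← hTZdef] at hrB
    by_cases hy : y = c
    · have hyξ : (y:ℤ) = ξ := by rw [hy]; exact hcξ
      rw [if_pos hy]
      have hbon : bonus W ξ (y:ℤ) = (W:ℤ)*((W:ℤ)+1) := by
        unfold bonus; rw [if_pos hyξ]
      have hadj0 : ¬(0 < |(y:ℤ) - ξ| ∧ |(y:ℤ) - ξ| ≤ (W:ℤ)) := by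
        rw [hyξ]; simp
      rw [if_neg hadj0, add_zero]
      have huy : uu y = α * ((tv W r ξ (y:ℤ) : ℤ) : ℝ) + γ := by
        simp only [huu]; rw [if_pos hyξ]
      rw [huy]
      have hcast : 2*(W:ℝ) * ((tv W r ξ (y:ℤ) : ℤ) : ℝ)
          ≤ ((TZ W r ξ (y:ℤ) : ℤ) : ℝ) + (W:ℝ)*((W:ℝ)+1) := by
        rw [hbon] at hrB
        exact_mod_cast hrB
      have hmul := mul_le_mul_of_nonneg_left hcast (le_of_lt hαpos)
      rw [hγ]
      nlinarith [hmul, hα1, hαpos]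
    · rw [if_neg hy]
      have hyξ : (y:ℤ) ≠ ξ := fun h => hy ((hzc y).mp h)
      have huy : uu y = α * ((tv W r ξ (y:ℤ) : ℤ) : ℝ) := by
        simp only [huu]; rw [if_neg hyξ, add_zero]
      rw [huy]
      by_cases hnear : 0 < |(y:ℤ) - ξ| ∧ |(y:ℤ) - ξ| ≤ (W:ℤ)
      · rw [if_pos hnear]
        have hbon : bonus W ξ (y:ℤ) = (W:ℤ)*((W:ℤ)-1) := by
          unfold bonus; rw [if_neg hyξ, if_pos hnear.2]
        rw [hbon] at hrB
        have hcast : 2*(W:ℝ) * ((tv W r ξ (y:ℤ) : ℤ) : ℝ)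
            ≤ ((TZ W r ξ (y:ℤ) : ℤ) : ℝ) + ((W:ℝ)^2 - (W:ℝ)) := by
          have h2 : ((2*(W:ℤ) * tv W r ξ (y:ℤ) : ℤ) : ℝ)
              ≤ ((TZ W r ξ (y:ℤ) + (W:ℤ)*((W:ℤ)-1) : ℤ) : ℝ) := by exact_mod_cast hrB
          push_cast at h2
          nlinarith [h2]
        have hmul := mul_le_mul_of_nonneg_left hcast (le_of_lt hαpos)
        rw [hγ]
        nlinarith [hmul]
      · rw [if_neg hnear, add_zero]
        have hpos0 : 0 < |(y:ℤ) - ξ| := abs_pos.mpr (sub_ne_zero.mpr hyξ)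
        have hbon : bonus W ξ (y:ℤ) = 0 := by
          unfold bonus
          rw [if_neg hyξ, if_neg (fun hB => hnear ⟨hpos0, hB⟩)]
        rw [hbon] at hrB
        have hcast : 2*(W:ℝ) * ((tv W r ξ (y:ℤ) : ℤ) : ℝ)
            ≤ ((TZ W r ξ (y:ℤ) : ℤ) : ℝ) := by
          have h2 : ((2*(W:ℤ) * tv W r ξ (y:ℤ) : ℤ) : ℝ)
              ≤ ((TZ W r ξ (y:ℤ) + 0 : ℤ) : ℝ) := by exact_mod_cast hrB
          push_cast at h2
          nlinarith [h2]
        have hmul := mul_le_mul_of_nonneg_left hcast (le_of_lt hαpos)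
        nlinarith [hmul]
  -- monotonicity : uu ≤ the Green column
  have hcol := band_inv_col W r ξ hW c
  have hge : ∀ i, uu i ≤ (bandMat ξ r W)⁻¹ i c := by
    have hrow2 : ∀ y, 0 ≤ (bandMat ξ r W).mulVec
        ((fun i => (bandMat ξ r W)⁻¹ i c) - uu) y := by
      intro y
      rw [Matrix.mulVec_sub, hcol]
      simp only [Pi.sub_apply, Pi.single_apply]
      linarith [hrowclaim y]
    have hm := mono W r ξ hW _ hrow2
    intro i
    have h3 := hm i
    simp only [Pi.sub_apply] at h3
    linarith
  -- conclude
  have hbterm : α ≤ (bandMat ξ r W)⁻¹ c b := by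
    have h1 := hge b
    have hub : uu b = α := by
      simp only [huu]
      rw [if_neg hbξ, htvb]
      norm_num
    rw [band_inv_symm W r ξ c b, ← hub]
    exact h1
  have hsum : (bandMat ξ r W)⁻¹ c b ≤ ∑ y : ↥(bandBall ξ r W),
      if 0 < |x - (y:ℤ)| ∧ |x - (y:ℤ)| ≤ (W:ℤ) then
        (bandMat ξ r W)⁻¹ c y else 0 := by
    have hterm := Finset.single_le_sum
      (f := fun y : ↥(bandBall ξ r W) =>
        if 0 < |x - (y:ℤ)| ∧ |x - (y:ℤ)| ≤ (W:ℤ) then (bandMat ξ r W)⁻¹ c y else 0)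
      (fun i _ => by
        by_cases h : 0 < |x - (i:ℤ)| ∧ |x - (i:ℤ)| ≤ (W:ℤ)
        · rw [if_pos h]; exact band_inv_nonneg W r ξ hW c i
        · rw [if_neg h])
      (Finset.mem_univ b)
    rw [if_pos hbx] at hterm
    exact hterm
  have hfinal : 1/(2*(W:ℝ)^3) ≤ α := by
    rw [div_le_iff₀ (by positivity)]
    have hDle : D ≤ 2*(W:ℝ)^3 := by rw [hD]; nlinarith
    nlinarith [hα1, hαpos, hDle]
  linarith [hbterm, hsum, hfinal]

end Mat

/-- **Poisson kernel bounds for the 1D band model** (second part of Lemma B.1):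
for every `x` in the exterior boundary `∂B_r(ξ) = {x : rW < |x-ξ| ≤ (r+1)W}`,
`1/(2W³) ≤ P_r(ξ,x) ≤ 1`. -/
theorem band1d_poisson (W r : ℕ) (hW : 1 ≤ W) (hr : 1 ≤ r) (ξ x : ℤ)
    (hx₁ : ((r * W : ℕ) : ℤ) < |x - ξ|) (hx₂ : |x - ξ| ≤ (((r + 1) * W : ℕ) : ℤ)) :
    1 / (2 * (W : ℝ) ^ 3) ≤ bandPoisson ξ r W x ∧ bandPoisson ξ r W x ≤ 1 := by
  push_cast at hx₁ hx₂
  have hrw1 : (1:ℤ) ≤ (r:ℤ)*W := by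
    have h := Nat.mul_le_mul hr hW
    exact_mod_cast h
  have hx₂' : |x - ξ| ≤ (r:ℤ)*W + (W:ℤ) := by nlinarith [hx₂]
  have hW1 : (1:ℤ) ≤ (W:ℤ) := by exact_mod_cast hW
  have hxout : x ∉ bandBall ξ r W := by
    rw [mem_ball_iff]
    rintro ⟨h1, h2⟩
    rcases abs_cases (x - ξ) with ⟨ha, hb⟩ | ⟨ha, hb⟩ <;> linarith
  constructor
  · unfold bandPoisson
    by_cases hside : ξ < x
    · have habs : |x - ξ| = x - ξ := abs_of_pos (by linarith)
      have hbmem : (ξ + (r:ℤ)*W) ∈ bandBall ξ r W := by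
        rw [mem_ball_iff]
        constructor <;> linarith
      refine band_lower_at W r ξ hW hr x ⟨ξ + (r:ℤ)*W, hbmem⟩ ?_ ?_ ?_
      · have h1 : 0 < x - (ξ + (r:ℤ)*W) := by linarith
        have h2 : |x - (ξ + (r:ℤ)*W)| = x - (ξ + (r:ℤ)*W) := abs_of_pos h1
        constructor
        · rw [h2]; linarith
        · rw [h2]; linarith
      · show tv W r ξ (ξ + (r:ℤ)*W) = 1
        unfold tv
        have h3 : ξ + (r:ℤ)*W - ξ = (r:ℤ)*W := by ring
        rw [h3, abs_of_nonneg (by linarith)]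
        ring
      · show ξ + (r:ℤ)*W ≠ ξ
        intro h
        have : (r:ℤ)*W = 0 := by linarith [h]
        linarith
    · have hxξ : x < ξ := by
        rcases lt_trichotomy x ξ with h | h | h
        · exact h
        · exfalso; rw [h] at hx₁; simp at hx₁; linarith
        · exact absurd h hside
      have habs : |x - ξ| = ξ - x := by rw [abs_of_neg (by linarith)]; ring
      have hbmem : (ξ - (r:ℤ)*W) ∈ bandBall ξ r W := by
        rw [mem_ball_iff]
        constructor <;> linarith
      refine band_lower_at W r ξ hW hr x ⟨ξ - (r:ℤ)*W, hbmem⟩ ?_ ?_ ?_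
      · have h1 : x - (ξ - (r:ℤ)*W) < 0 := by linarith
        have h2 : |x - (ξ - (r:ℤ)*W)| = -(x - (ξ - (r:ℤ)*W)) := abs_of_neg h1
        constructor
        · rw [h2]; linarith
        · rw [h2]; linarith
      · show tv W r ξ (ξ - (r:ℤ)*W) = 1
        unfold tv
        have h3 : ξ - (r:ℤ)*W - ξ = -((r:ℤ)*W) := by ring
        rw [h3, abs_neg, abs_of_nonneg (by linarith)]
        ring
      · show ξ - (r:ℤ)*W ≠ ξ
        intro h
        have : (r:ℤ)*W = 0 := by linarith [h]
        linarith
  · unfold bandPoisson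
    exact band_upper W r ξ hW x hxout

end Band1D
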